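/- Let λ₁, λ_N, μ, α₋, α₊ > 0 with α₋ ≤ α₊ and L ≥ 0. Then there exists ε₀ > 0, depending only on λ₁, λ_N, L, μ, α₊, such that the following holds. Let S < T, let p, q : [S,T] → ℝ be differentiable nonnegative functions, let n : [S,T] → ℝ satisfy n(t) ≥ λ₁ (p(t) + q(t)) for all t, and let α : [S,T] → ℝ satisfy α₋ ≤ α(t) ≤ α₊ for all t. Assume that for all t ∈ [S,T]: (q − p)'(t) + α(t)(q(t) − p(t)) ≤ −μ n(t), (p + q)'(t) ≤ 2L n(t), and −p'(t) ≤ 2(λ_N + L) n(t). Then for every ε ∈ (0, ε₀) and all t ∈ [S,T]: (q − p + ε(p + q))'(t) + (α(t) + (1/2)λ₁μ)(q − p + ε(p + q))(t) ≤ 0 and (q − p − ε(p + q))'(t) + (α(t) − (1/2)λ₁μ)(q − p − ε(p + q))(t) ≤ 0. -/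

import Mathlib

theorem strong_cone_core (lam1 lamN mu alo ahi L : ℝ)
    (hlam1 : 0 < lam1) (hlamN : 0 < lamN) (hmu : 0 < mu) (halo : 0 < alo)
    (hahi : 0 < ahi) (hL : 0 ≤ L)
    (P Q P' Q' N A ε : ℝ)
    (hP : 0 ≤ P) (hQ : 0 ≤ Q) (hN : lam1 * (P + Q) ≤ N)
    (hA0 : alo ≤ A) (hA : A ≤ ahi)
    (h1 : (Q' - P') + A * (Q - P) ≤ -mu * N)
    (h2 : P' + Q' ≤ 2 * L * N)
    (h3 : -P' ≤ 2 * (lamN + L) * N)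
    (hε : 0 < ε)
    (hεC : ε * (2*lam1*mu + 4*lam1*(lamN+L) + 4*lam1*L + 2*ahi) ≤ lam1*mu/2) :
    ((Q' - P') + ε * (P' + Q')) + (A + (1/2)*lam1*mu) * ((Q - P) + ε * (P + Q)) ≤ 0
    ∧ ((Q' - P') - ε * (P' + Q')) + (A - (1/2)*lam1*mu) * ((Q - P) - ε * (P + Q)) ≤ 0 := by
  have hN0 : 0 ≤ N := le_trans (by positivity) hN
  have hPQ : 0 ≤ P + Q := by linarith
  have hε1 : ε ≤ 1/4 := by
    nlinarith [mul_pos hε (mul_pos hlam1 hmu), mul_pos hlam1 hmu,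
      mul_nonneg hε.le (mul_nonneg hlam1.le hL),
      mul_nonneg hε.le (mul_nonneg hlam1.le hlamN.le),
      mul_nonneg hε.le hahi.le]
  -- common nonnegativity facts
  have n1 : 0 ≤ ε * lam1 * mu * N := by positivity
  have n2 : 0 ≤ ε * lam1 * lamN * N := by positivity
  have n3 : 0 ≤ ε * lam1 * L * N := by positivity
  have n4 : 0 ≤ ε * ahi * N := by positivity
  have g6 : ε * (2*lam1*mu + 4*lam1*(lamN+L) + 4*lam1*L + 2*ahi) * N ≤ (lam1*mu/2) * N :=
    mul_le_mul_of_nonneg_right hεC hN0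
  constructor
  · rw [← mul_le_mul_iff_right₀ hlam1, mul_zero]
    have g1 : lam1 * ((Q' - P') + A * (Q - P)) ≤ lam1 * (-mu * N) :=
      mul_le_mul_of_nonneg_left h1 hlam1.le
    have g2 : (lam1 * ε) * (P' + Q') ≤ (lam1 * ε) * (2 * L * N) :=
      mul_le_mul_of_nonneg_left h2 (by positivity)
    have hQP : lam1 * (Q - P) ≤ N := by nlinarith
    have g3 : (lam1*mu/2) * (lam1 * (Q - P)) ≤ (lam1*mu/2) * N :=
      mul_le_mul_of_nonneg_left hQP (by positivity)
    have g4a : lam1 * (ε * (A * (P + Q))) ≤ lam1 * (ε * (ahi * (P + Q))) := by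
      apply mul_le_mul_of_nonneg_left _ hlam1.le
      exact mul_le_mul_of_nonneg_left (mul_le_mul_of_nonneg_right hA hPQ) hε.le
    have g4b : (ε * ahi) * (lam1 * (P + Q)) ≤ (ε * ahi) * N :=
      mul_le_mul_of_nonneg_left hN (by positivity)
    have g5 : (ε * (lam1*mu/2)) * (lam1 * (P + Q)) ≤ (ε * (lam1*mu/2)) * N :=
      mul_le_mul_of_nonneg_left hN (by positivity)
    linarith [g1, g2, g3, g4a, g4b, g5, g6, n1, n2, n3, n4]
  · rw [← mul_le_mul_iff_right₀ hlam1, mul_zero]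
    have k1 : (lam1 * (1 - ε)) * ((Q' - P') + A * (Q - P)) ≤ (lam1 * (1 - ε)) * (-mu * N) :=
      mul_le_mul_of_nonneg_left h1 (by nlinarith)
    have k2 : (2 * ε * lam1) * (-P') ≤ (2 * ε * lam1) * (2 * (lamN + L) * N) :=
      mul_le_mul_of_nonneg_left h3 (by positivity)
    have k3 : lam1 * (P - Q) ≤ N := by nlinarith
    have k3' : (lam1*mu/2) * (lam1 * (P - Q)) ≤ (lam1*mu/2) * N :=
      mul_le_mul_of_nonneg_left k3 (by positivity)
    have k4 : (ε * (lam1*mu/2)) * (lam1 * (P + Q)) ≤ (ε * (lam1*mu/2)) * N :=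
      mul_le_mul_of_nonneg_left hN (by positivity)
    have k5 : 0 ≤ lam1 * ε * A * P := by
      have : 0 < A := lt_of_lt_of_le halo hA0
      positivity
    linarith [k1, k2, k3', k4, k5, g6, n1, n2, n3, n4]

open Set in
/-- Robustness of the strong cone condition (normal hyperbolicity of the cone
family): there is `ε₀ > 0`, depending only on `λ₁, λ_N, L, μ, α₊`, such that if
`p = ‖P_N v‖²_{H^{-1}}`, `q = ‖Q_N v‖²_{H^{-1}}`, `n = ‖v‖²_H` satisfy the strong
cone inequality and the two auxiliary energy inequalities, then for every
`ε ∈ (0, ε₀)` the perturbed forms `V_{±ε} = q − p ± ε(p + q)` satisfy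
`V_ε' + (α + λ₁μ/2)V_ε ≤ 0` and `V_{−ε}' + (α − λ₁μ/2)V_{−ε} ≤ 0`. -/
theorem strong_cone_robustness (lam1 lamN mu alo ahi L : ℝ)
    (hlam1 : 0 < lam1) (hlamN : 0 < lamN) (hmu : 0 < mu)
    (halo : 0 < alo) (hahi : 0 < ahi) (hle : alo ≤ ahi) (hL : 0 ≤ L) :
    ∃ ε₀ : ℝ, 0 < ε₀ ∧
      ∀ (S T : ℝ), S < T →
      ∀ (p q p' q' n α : ℝ → ℝ),
        (∀ t ∈ Icc S T, HasDerivWithinAt p (p' t) (Icc S T) t) →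
        (∀ t ∈ Icc S T, HasDerivWithinAt q (q' t) (Icc S T) t) →
        (∀ t ∈ Icc S T, 0 ≤ p t) →
        (∀ t ∈ Icc S T, 0 ≤ q t) →
        (∀ t ∈ Icc S T, lam1 * (p t + q t) ≤ n t) →
        (∀ t ∈ Icc S T, alo ≤ α t ∧ α t ≤ ahi) →
        (∀ t ∈ Icc S T, (q' t - p' t) + α t * (q t - p t) ≤ -mu * n t) →
        (∀ t ∈ Icc S T, p' t + q' t ≤ 2 * L * n t) →
        (∀ t ∈ Icc S T, -p' t ≤ 2 * (lamN + L) * n t) →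
        ∀ ε : ℝ, 0 < ε → ε < ε₀ → ∀ t ∈ Icc S T,
          ((q' t - p' t) + ε * (p' t + q' t))
              + (α t + (1 / 2) * lam1 * mu) * ((q t - p t) + ε * (p t + q t)) ≤ 0
          ∧
          ((q' t - p' t) - ε * (p' t + q' t))
              + (α t - (1 / 2) * lam1 * mu) * ((q t - p t) - ε * (p t + q t)) ≤ 0 := by
  set C : ℝ := 2*lam1*mu + 4*lam1*(lamN+L) + 4*lam1*L + 2*ahi with hCdef
  have hC : 0 < C := by positivity
  refine ⟨lam1 * mu / (2 * C), by positivity, ?_⟩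
  intro S T _ p q p' q' n α _ _ hp0 hq0 hn hα h1 h2 h3 ε hε hεlt t ht
  have hεC : ε * C ≤ lam1 * mu / 2 := by
    have := (lt_div_iff₀ (by positivity : (0:ℝ) < 2 * C)).mp hεlt
    nlinarith
  exact strong_cone_core lam1 lamN mu alo ahi L hlam1 hlamN hmu halo hahi hL
    (p t) (q t) (p' t) (q' t) (n t) (α t) ε
    (hp0 t ht) (hq0 t ht) (hn t ht) (hα t ht).1 (hα t ht).2
    (h1 t ht) (h2 t ht) (h3 t ht) hε (by rw [hCdef] at hεC; linarith)
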